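/- (Reverse Sauer inequality) For any family F ⊆ 2^[n], the number of sets strongly traced by F is at most |F|. -/

import Mathlib

/-- `𝓕` strongly traces `T` if there is a support `S` disjoint from `T` with
`{A ∪ S : A ⊆ T} ⊆ 𝓕`. -/
def StronglyTraces {n : ℕ} (𝓕 : Finset (Finset (Fin n))) (T : Finset (Fin n)) : Prop :=
  ∃ S : Finset (Fin n), S ∩ T = ∅ ∧ ∀ A ∈ T.powerset, A ∪ S ∈ 𝓕

instance {n : ℕ} (𝓕 : Finset (Finset (Fin n))) (T : Finset (Fin n)) :
    Decidable (StronglyTraces 𝓕 T) := by unfold StronglyTraces; infer_instance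

variable {α : Type*} [DecidableEq α]

/-- The sets `T ⊆ U` strongly traced by `F` using a support inside `U`. -/
def strSet (U : Finset α) (F : Finset (Finset α)) : Finset (Finset α) :=
  U.powerset.filter (fun T => ∃ S ∈ U.powerset, S ∩ T = ∅ ∧ ∀ A ∈ T.powerset, A ∪ S ∈ F)

lemma strSet_mono (U : Finset α) {F G : Finset (Finset α)} (h : F ⊆ G) :
    strSet U F ⊆ strSet U G := by
  intro T hT
  simp only [strSet, Finset.mem_filter] at *
  obtain ⟨hTU, S, hS, h1, h2⟩ := hT
  exact ⟨hTU, S, hS, h1, fun A hA => h (h2 A hA)⟩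

lemma strSet_card_le (U : Finset α) : ∀ F : Finset (Finset α),
    (∀ A ∈ F, A ⊆ U) → (strSet U F).card ≤ F.card := by
  induction U using Finset.induction_on with
  | empty =>
    intro F _
    by_cases h : (strSet ∅ F).Nonempty
    · obtain ⟨T, hT⟩ := h
      simp only [strSet, Finset.mem_filter] at hT
      simp only [Finset.powerset_empty, Finset.mem_singleton] at hT
      obtain ⟨hT0, S, hS, -, h2⟩ := hT
      subst hT0; subst hS
      have hemp : (∅ : Finset α) ∈ F := by simpa using h2 ∅ (by simp)
      calc (strSet (∅ : Finset α) F).card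
          ≤ ((∅ : Finset α).powerset).card :=
            Finset.card_le_card (Finset.filter_subset _ _)
        _ = 1 := by simp
        _ ≤ F.card := Finset.card_pos.mpr ⟨∅, hemp⟩
    · rw [Finset.not_nonempty_iff_eq_empty.mp h]
      simp
  | @insert x U hxU ih =>
    intro F hF
    set F₀ := F.filter (fun A => x ∉ A) with hF₀
    set Fx := F.filter (fun A => x ∈ A) with hFx
    set F₁ := Fx.image (fun A => A.erase x) with hF₁
    have hcard : F₀.card + F₁.card = F.card := by
      have h1 : F₁.card = Fx.card := by
        apply Finset.card_image_of_injOn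
        intro A hA B hB hAB
        simp only [Finset.mem_coe, hFx, Finset.mem_filter] at hA hB
        replace hAB : A.erase x = B.erase x := hAB
        rw [← Finset.insert_erase hA.2, hAB, Finset.insert_erase hB.2]
      rw [h1, hF₀, hFx, add_comm]
      exact Finset.card_filter_add_card_filter_not _
    have hF₀U : ∀ A ∈ F₀, A ⊆ U := by
      intro A hA
      simp only [hF₀, Finset.mem_filter] at hA
      exact (Finset.subset_insert_iff_of_notMem hA.2).mp (hF A hA.1)
    have hF₁U : ∀ A ∈ F₁, A ⊆ U := by
      intro A hA
      simp only [hF₁, Finset.mem_image] at hA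
      obtain ⟨B, hB, rfl⟩ := hA
      simp only [hFx, Finset.mem_filter] at hB
      exact Finset.subset_insert_iff.mp (hF B hB.1)
    -- Part 1: traced sets not containing x
    have hpart1 : (strSet (insert x U) F).filter (fun T => x ∉ T)
        ⊆ strSet U F₀ ∪ strSet U F₁ := by
      intro T hT
      simp only [Finset.mem_filter, strSet, Finset.mem_powerset] at hT
      obtain ⟨⟨hTU, S, hSU, hST, hall⟩, hxT⟩ := hT
      have hTU' : T ⊆ U := (Finset.subset_insert_iff_of_notMem hxT).mp hTU
      by_cases hxS : x ∈ S
      · apply Finset.mem_union_right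
        simp only [strSet, Finset.mem_filter, Finset.mem_powerset]
        refine ⟨hTU', S.erase x, Finset.subset_insert_iff.mp hSU, ?_, ?_⟩
        · rw [← Finset.subset_empty, ← hST]
          exact Finset.inter_subset_inter (Finset.erase_subset _ _) le_rfl
        · intro A hA
          have hAF : A ∪ S ∈ F := hall A hA
          have hxA : x ∉ A := fun h => hxT (hA h)
          have : A ∪ S ∈ Fx := by
            simp only [hFx, Finset.mem_filter]
            exact ⟨hAF, Finset.mem_union_right _ hxS⟩
          have hmem : (A ∪ S).erase x ∈ F₁ := Finset.mem_image_of_mem _ this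
          rwa [Finset.erase_union_distrib, Finset.erase_eq_of_notMem hxA] at hmem
      · apply Finset.mem_union_left
        simp only [strSet, Finset.mem_filter, Finset.mem_powerset]
        refine ⟨hTU', S, (Finset.subset_insert_iff_of_notMem hxS).mp hSU, hST, ?_⟩
        intro A hA
        have hAF : A ∪ S ∈ F := hall A hA
        have hxA : x ∉ A := fun h => hxT (hA h)
        simp only [hF₀, Finset.mem_filter]
        exact ⟨hAF, by simp [hxA, hxS]⟩
    -- Part 2: traced sets containing x inject into strSet U (F₀ ∩ F₁)
    have hpart2 : ((strSet (insert x U) F).filter (fun T => x ∈ T)).card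
        ≤ (strSet U (F₀ ∩ F₁)).card := by
      apply Finset.card_le_card_of_injOn (fun T => T.erase x)
      · intro T hT
        replace hT : T ∈ (strSet (insert x U) F).filter (fun T => x ∈ T) := hT
        show T.erase x ∈ strSet U (F₀ ∩ F₁)
        simp only [strSet] at hT ⊢
        simp only [Finset.mem_filter, Finset.mem_powerset] at hT ⊢
        obtain ⟨⟨hTU, S, hSU, hST, hall⟩, hxT⟩ := hT
        have hxS : x ∉ S := by
          intro h
          have : x ∈ S ∩ T := Finset.mem_inter.mpr ⟨h, hxT⟩
          rw [hST] at this; exact absurd this (Finset.notMem_empty x)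
        refine ⟨Finset.subset_insert_iff.mp hTU, S,
          (Finset.subset_insert_iff_of_notMem hxS).mp hSU, ?_, ?_⟩
        · rw [← Finset.subset_empty, ← hST]
          exact Finset.inter_subset_inter le_rfl (Finset.erase_subset _ _)
        · intro A hA
          have hxA : x ∉ A := fun h => Finset.notMem_erase x T (hA h)
          have hAT : A ⊆ T := hA.trans (Finset.erase_subset _ _)
          have h0 : A ∪ S ∈ F₀ := by
            simp only [hF₀, Finset.mem_filter]
            exact ⟨hall A hAT, by simp [hxA, hxS]⟩
          have h1 : A ∪ S ∈ F₁ := by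
            have hins : insert x A ⊆ T := Finset.insert_subset hxT hAT
            have : insert x A ∪ S ∈ Fx := by
              simp only [hFx, Finset.mem_filter]
              exact ⟨hall _ hins,
                Finset.mem_union_left _ (Finset.mem_insert_self x A)⟩
            have hmem : (insert x A ∪ S).erase x ∈ F₁ :=
              Finset.mem_image_of_mem _ this
            rwa [Finset.erase_union_distrib, Finset.erase_insert hxA,
              Finset.erase_eq_of_notMem hxS] at hmem
          exact Finset.mem_inter.mpr ⟨h0, h1⟩
      · intro T₁ h₁ T₂ h₂ h12
        simp only [Finset.mem_coe, Finset.mem_filter] at h₁ h₂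
        replace h12 : T₁.erase x = T₂.erase x := h12
        rw [← Finset.insert_erase h₁.2, h12, Finset.insert_erase h₂.2]
    have hiU : ∀ A ∈ F₀ ∩ F₁, A ⊆ U := fun A hA => hF₀U A (Finset.mem_inter.mp hA).1
    have hsplit : (strSet (insert x U) F).card
        = ((strSet (insert x U) F).filter (fun T => x ∈ T)).card
          + ((strSet (insert x U) F).filter (fun T => x ∉ T)).card :=
      (Finset.card_filter_add_card_filter_not _).symm
    have hsub : strSet U (F₀ ∩ F₁) ⊆ strSet U F₀ ∩ strSet U F₁ :=
      Finset.subset_inter (strSet_mono U Finset.inter_subset_left)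
        (strSet_mono U Finset.inter_subset_right)
    calc (strSet (insert x U) F).card
        = ((strSet (insert x U) F).filter (fun T => x ∈ T)).card
          + ((strSet (insert x U) F).filter (fun T => x ∉ T)).card := hsplit
      _ ≤ (strSet U (F₀ ∩ F₁)).card + (strSet U F₀ ∪ strSet U F₁).card := by
          exact Nat.add_le_add hpart2 (Finset.card_le_card hpart1)
      _ ≤ (strSet U F₀ ∩ strSet U F₁).card + (strSet U F₀ ∪ strSet U F₁).card :=
          Nat.add_le_add_right (Finset.card_le_card hsub) _
      _ = (strSet U F₀).card + (strSet U F₁).card := by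
          rw [add_comm, Finset.card_union_add_card_inter]
      _ ≤ F₀.card + F₁.card := Nat.add_le_add (ih F₀ hF₀U) (ih F₁ hF₁U)
      _ = F.card := hcard

/-- The reverse Sauer inequality: `𝓕` strongly traces at most `|𝓕|` sets. -/
theorem reverse_sauer (n : ℕ) (𝓕 : Finset (Finset (Fin n))) :
    ((Finset.univ : Finset (Finset (Fin n))).filter (fun T => StronglyTraces 𝓕 T)).card
      ≤ 𝓕.card := by
  have h := strSet_card_le (Finset.univ : Finset (Fin n)) 𝓕 (fun A _ => Finset.subset_univ A)
  have heq : (Finset.univ.filter (fun T => StronglyTraces 𝓕 T))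
      = strSet Finset.univ 𝓕 := by
    ext T
    simp [strSet, StronglyTraces]
  rwa [heq]
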